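/- Let φ: ℝ → ℝ be strictly convex with superlinear growth, ψ its convex conjugate, and P ⊂ ℝ a set of positive Lebesgue measure such that for every x₀ ∈ P there exist c(x₀), δ(x₀) > 0 with φ(x) − φ(x₀) − y₀(x − x₀) ≥ c(x₀)|x − x₀|² for all x ∈ B(x₀, δ(x₀)) and all y₀ ∈ D⁻φ(x₀). Then for every y₀ with Dψ(y₀) ∈ P, limsup_{y → y₀} |Dψ(y) − Dψ(y₀)|/|y − y₀| < ∞. -/

import Mathlib

open Filter Set Topology MeasureTheory

/-- The subdifferential of `φ` at `x`. -/
def subdiff (φ : ℝ → ℝ) (x : ℝ) : Set ℝ :=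
  {y | ∀ x', φ x + y * (x' - x) ≤ φ x'}

section Aux

variable {φ ψ : ℝ → ℝ}

lemma phi_cont (hφ : StrictConvexOn ℝ Set.univ φ) : Continuous φ := by
  have h := hφ.convexOn.continuousOn isOpen_univ
  exact continuousOn_univ.mp h

lemma exists_max (hφ : StrictConvexOn ℝ Set.univ φ)
    (hsl : Tendsto (fun x => φ x / |x|) (Bornology.cobounded ℝ) atTop) (y : ℝ) :
    ∃ x, y ∈ subdiff φ x := by
  set K : ℝ := |y| + |φ 0| + 1 with hK
  have hev : ∀ᶠ x in Bornology.cobounded ℝ, K ≤ φ x / |x| :=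
    hsl.eventually (eventually_ge_atTop K)
  rw [Real.cobounded_eq, eventually_sup, eventually_atBot, eventually_atTop] at hev
  obtain ⟨⟨a, ha⟩, b, hb⟩ := hev
  set R : ℝ := max 1 (max (-a) b) with hR
  have hR1 : (1:ℝ) ≤ R := le_max_left _ _
  have hout : ∀ x : ℝ, R < |x| → x * y - φ x < 0 * y - φ 0 := by
    intro x hx
    have h1x : 1 < |x| := lt_of_le_of_lt hR1 hx
    have hKx : K ≤ φ x / |x| := by
      rcases le_or_gt 0 x with hx0 | hx0
      · apply hb
        have : R < x := by rwa [abs_of_nonneg hx0] at hx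
        exact le_trans (le_trans (le_max_right _ _) (le_max_right _ _)) this.le
      · apply ha
        have : R < -x := by rwa [abs_of_neg hx0] at hx
        have h2 : -a ≤ R := le_trans (le_max_left _ _) (le_max_right _ _)
        linarith
    have hφx : K * |x| ≤ φ x := by
      exact (le_div_iff₀ (by linarith : (0:ℝ) < |x|)).mp hKx
    have hxy : x * y ≤ |x| * |y| := by
      calc x * y ≤ |x * y| := le_abs_self _
        _ = |x| * |y| := abs_mul _ _
    have : |φ 0| * |x| ≥ |φ 0| := by
      nlinarith [abs_nonneg (φ 0), h1x]
    nlinarith [abs_nonneg (φ 0), le_abs_self (φ 0), neg_abs_le (φ 0)]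
  have hcompact : IsCompact (Icc (-R) R) := isCompact_Icc
  have hne : (Icc (-R) R).Nonempty := ⟨0, by constructor <;> linarith⟩
  have hcont : ContinuousOn (fun x => x * y - φ x) (Icc (-R) R) :=
    ((continuous_id.mul continuous_const).sub (phi_cont hφ)).continuousOn
  obtain ⟨x, hxmem, hxmax⟩ := hcompact.exists_isMaxOn hne hcont
  refine ⟨x, fun u => ?_⟩
  have hmax : ∀ u, u * y - φ u ≤ x * y - φ x := by
    intro u
    rcases le_or_gt |u| R with hu | hu
    · simpa using hxmax (abs_le.mp hu)
    · have h0 : (0:ℝ) ∈ Icc (-R) R := ⟨by linarith, by linarith⟩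
      have h1 := hxmax h0
      simp only [Set.mem_setOf_eq] at h1
      have h2 := hout u hu
      linarith
  have := hmax u
  nlinarith

lemma strict_gap (hφ : StrictConvexOn ℝ Set.univ φ) {x y z : ℝ}
    (hy : y ∈ subdiff φ x) (hz : z ≠ x) : φ x + y * (z - x) < φ z := by
  rcases lt_or_eq_of_le (hy z) with h | h
  · exact h
  · exfalso
    have hm := hφ.2 (mem_univ x) (mem_univ z) (Ne.symm hz)
      (by norm_num : (0:ℝ) < 1/2) (by norm_num : (0:ℝ) < 1/2) (by norm_num)
    have hsub := hy ((1/2 : ℝ) • x + (1/2 : ℝ) • z)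
    simp only [smul_eq_mul] at hm hsub
    nlinarith [hm, hsub]

lemma chord (hφ : StrictConvexOn ℝ Set.univ φ) {x₀ x' y' : ℝ}
    (hy' : y' ∈ subdiff φ x') (b : ℝ) (hb0 : 0 ≤ b) (hb1 : b ≤ 1) :
    φ (x₀ + b * (x' - x₀)) ≤ φ x₀ + y' * (b * (x' - x₀)) := by
  have hc := hφ.convexOn.2 (mem_univ x₀) (mem_univ x') (by linarith : (0:ℝ) ≤ 1 - b) hb0
    (by ring)
  simp only [smul_eq_mul] at hc
  have h1 : (1 - b) * x₀ + b * x' = x₀ + b * (x' - x₀) := by ring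
  rw [h1] at hc
  have h2 := hy' x₀
  nlinarith [mul_le_mul_of_nonneg_left h2 hb0]

lemma close (hφ : StrictConvexOn ℝ Set.univ φ) {x x' y y' ε : ℝ} (hε : 0 < ε)
    (hy' : y' ∈ subdiff φ x')
    (h : |y' - y| * ε < min (φ (x + ε) - φ x - y * ε) (φ (x - ε) - φ x + y * ε)) :
    |x' - x| ≤ ε := by
  by_contra hcon
  push_neg at hcon
  have habs : |y' - y| * ε < |y' - y| * ε := by
    rcases lt_abs.mp hcon with hgt | hlt
    · have hne : x' - x ≠ 0 := by intro h0; rw [h0] at hgt; linarith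
      have hb0 : 0 ≤ ε / (x' - x) := div_nonneg hε.le (by linarith)
      have hb1 : ε / (x' - x) ≤ 1 := (div_le_one (by linarith)).mpr (by linarith)
      have hc := chord hφ hy' (x₀ := x) (ε / (x' - x)) hb0 hb1
      rw [div_mul_cancel₀ _ hne] at hc
      calc |y' - y| * ε < φ (x + ε) - φ x - y * ε := lt_of_lt_of_le h (min_le_left _ _)
        _ ≤ (y' - y) * ε := by linarith
        _ ≤ |y' - y| * ε := mul_le_mul_of_nonneg_right (le_abs_self _) hε.le
    · have hgt : x - x' > ε := by linarith
      have hne : x' - x ≠ 0 := by intro h0; rw [h0] at hlt; simp at hlt; linarith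
      have hb0 : 0 ≤ -ε / (x' - x) := by
        rw [div_nonneg_iff]; right; constructor <;> linarith
      have hb1 : -ε / (x' - x) ≤ 1 := by
        rw [div_le_one_of_neg (by linarith)]; linarith
      have hc := chord hφ hy' (x₀ := x) (-ε / (x' - x)) hb0 hb1
      rw [div_mul_cancel₀ _ hne] at hc
      have hxm : x + -ε = x - ε := by ring
      rw [hxm] at hc
      calc |y' - y| * ε < φ (x - ε) - φ x + y * ε := lt_of_lt_of_le h (min_le_right _ _)
        _ ≤ (y - y') * ε := by nlinarith
        _ ≤ |y' - y| * ε := by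
            have : y - y' ≤ |y' - y| := by rw [abs_sub_comm]; exact le_abs_self _
            exact mul_le_mul_of_nonneg_right this hε.le
  exact lt_irrefl _ habs

lemma psi_eq (hψ : ∀ y, IsLUB {z | ∃ x, z = x * y - φ x} (ψ y)) {x y : ℝ}
    (hy : y ∈ subdiff φ x) : ψ y = x * y - φ x := by
  refine (hψ y).unique ⟨?_, ?_⟩
  · rintro z ⟨u, rfl⟩
    have := hy u
    nlinarith
  · intro b hb
    exact hb ⟨x, rfl⟩

lemma psi_sub (hψ : ∀ y, IsLUB {z | ∃ x, z = x * y - φ x} (ψ y)) {x y : ℝ}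
    (hy : y ∈ subdiff φ x) (y' : ℝ) : ψ y + x * (y' - y) ≤ ψ y' := by
  have h1 : x * y' - φ x ≤ ψ y' := (hψ y').1 ⟨x, rfl⟩
  have h2 := psi_eq hψ hy
  nlinarith

lemma hasDeriv (hφ : StrictConvexOn ℝ Set.univ φ)
    (hsl : Tendsto (fun x => φ x / |x|) (Bornology.cobounded ℝ) atTop)
    (hψ : ∀ y, IsLUB {z | ∃ x, z = x * y - φ x} (ψ y)) {x y : ℝ}
    (hy : y ∈ subdiff φ x) : HasDerivAt ψ x y := by
  rw [hasDerivAt_iff_tendsto_slope, Metric.tendsto_nhdsWithin_nhds]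
  intro ε hε
  set ε' := ε / 2 with hε'def
  have hε' : 0 < ε' := by positivity
  have g1 : 0 < φ (x + ε') - φ x - y * ε' := by
    have := strict_gap hφ hy (z := x + ε') (by intro h; nlinarith [congrArg (· - x) h])
    nlinarith [this]
  have g2 : 0 < φ (x - ε') - φ x + y * ε' := by
    have := strict_gap hφ hy (z := x - ε') (by intro h; nlinarith [congrArg (· - x) h])
    nlinarith [this]
  set m := min (φ (x + ε') - φ x - y * ε') (φ (x - ε') - φ x + y * ε') with hm
  have hmpos : 0 < m := lt_min g1 g2
  refine ⟨m / (2 * ε'), by positivity, ?_⟩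
  intro y' hy'mem hdist
  obtain ⟨x', hx'⟩ := exists_max hφ hsl y'
  have hyne : y' ≠ y := hy'mem
  have hd : |y' - y| < m / (2 * ε') := by rwa [Real.dist_eq] at hdist
  have hclose : |x' - x| ≤ ε' := by
    apply close hφ hε' hx'
    rw [← hm]
    calc |y' - y| * ε' < m / (2 * ε') * ε' := by
          exact mul_lt_mul_of_pos_right hd hε'
      _ = m / 2 := by field_simp
      _ < m := by linarith
  have hne : y' - y ≠ 0 := sub_ne_zero.mpr hyne
  have hA := psi_sub hψ hy y'
  have hB := psi_sub hψ hx' y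
  have hE1 : 0 ≤ ψ y' - ψ y - x * (y' - y) := by linarith
  have hE2 : ψ y' - ψ y - x * (y' - y) ≤ (x' - x) * (y' - y) := by nlinarith [hB]
  have hEabs : |ψ y' - ψ y - x * (y' - y)| ≤ ε' * |y' - y| := by
    rw [abs_of_nonneg hE1]
    calc ψ y' - ψ y - x * (y' - y) ≤ (x' - x) * (y' - y) := hE2
      _ ≤ |(x' - x) * (y' - y)| := le_abs_self _
      _ = |x' - x| * |y' - y| := abs_mul _ _
      _ ≤ ε' * |y' - y| := mul_le_mul_of_nonneg_right hclose (abs_nonneg _)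
  rw [Real.dist_eq]
  have hslope : slope ψ y y' - x = (ψ y' - ψ y - x * (y' - y)) / (y' - y) := by
    rw [slope_def_field]; field_simp
  rw [hslope, abs_div]
  have hyy : 0 < |y' - y| := abs_pos.mpr hne
  rw [div_lt_iff₀ hyy]
  calc |ψ y' - ψ y - x * (y' - y)| ≤ ε' * |y' - y| := hEabs
    _ < ε * |y' - y| := by
        apply mul_lt_mul_of_pos_right _ hyy
        linarith

end Aux

theorem stmt12 (φ ψ : ℝ → ℝ) (hφ : StrictConvexOn ℝ Set.univ φ)
    (hsl : Tendsto (fun x => φ x / |x|) (Bornology.cobounded ℝ) atTop)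
    (hψ : ∀ y, IsLUB {z | ∃ x, z = x * y - φ x} (ψ y))
    (P : Set ℝ) (hPmeas : MeasurableSet P) (hP : 0 < volume P)
    (hstrong : ∀ x₀ ∈ P, ∃ c > (0:ℝ), ∃ δ > (0:ℝ), ∀ y₀ ∈ subdiff φ x₀,
      ∀ x ∈ Metric.ball x₀ δ, c * |x - x₀|^2 ≤ φ x - φ x₀ - y₀ * (x - x₀)) :
    ∀ y₀ : ℝ, deriv ψ y₀ ∈ P →
      ∃ M : ℝ, ∀ᶠ y in 𝓝[≠] y₀, |deriv ψ y - deriv ψ y₀| / |y - y₀| ≤ M := by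
  intro y₀ hy₀P
  obtain ⟨x₀, hx₀⟩ := exists_max hφ hsl y₀
  have hder : ∀ y x, y ∈ subdiff φ x → deriv ψ y = x :=
    fun y x h => (hasDeriv hφ hsl hψ h).deriv
  have hd0 : deriv ψ y₀ = x₀ := hder y₀ x₀ hx₀
  rw [hd0] at hy₀P
  obtain ⟨c, hc, δ, hδ, hst⟩ := hstrong x₀ hy₀P
  refine ⟨1/c, ?_⟩
  have hmem : Metric.ball y₀ (c*δ/2) ∈ 𝓝 y₀ := Metric.ball_mem_nhds _ (by positivity)
  filter_upwards [mem_nhdsWithin_of_mem_nhds hmem, self_mem_nhdsWithin] with y hyball hyne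
  have hyne' : y ≠ y₀ := hyne
  obtain ⟨x', hx'⟩ := exists_max hφ hsl y
  rw [hder y x' hx', hd0]
  have hyy : |y - y₀| < c*δ/2 := by rwa [Metric.mem_ball, Real.dist_eq] at hyball
  have key : |x' - x₀| ≤ |y - y₀| / c := by
    by_cases hcase : |x' - x₀| ≤ δ/2
    · have hzball : x' ∈ Metric.ball x₀ δ := by
        rw [Metric.mem_ball, Real.dist_eq]; linarith
      have h1 := hst y₀ hx₀ x' hzball
      have h2 := chord hφ hx' (x₀ := x₀) 1 zero_le_one le_rfl
      rw [one_mul] at h2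
      have h3 : x₀ + (x' - x₀) = x' := by ring
      rw [h3] at h2
      have h4 : c * |x' - x₀|^2 ≤ |y - y₀| * |x' - x₀| := by
        calc c * |x' - x₀|^2 ≤ φ x' - φ x₀ - y₀*(x'-x₀) := h1
          _ ≤ (y - y₀)*(x' - x₀) := by linarith
          _ ≤ |(y - y₀)*(x' - x₀)| := le_abs_self _
          _ = |y - y₀| * |x' - x₀| := abs_mul _ _
      rcases eq_or_lt_of_le (abs_nonneg (x' - x₀)) with h0 | h0
      · rw [← h0]; positivity
      · rw [le_div_iff₀ hc]
        nlinarith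
    · exfalso
      push_neg at hcase
      set b := (δ/2)/|x' - x₀| with hb
      have hdpos : 0 < |x' - x₀| := by linarith
      have hb0 : 0 ≤ b := by positivity
      have hb1 : b ≤ 1 := by rw [div_le_one hdpos]; linarith
      have hbnn : 0 ≤ b := hb0
      have habs : |b * (x' - x₀)| = δ/2 := by
        rw [abs_mul, abs_of_nonneg hb0, hb, div_mul_cancel₀ _ (ne_of_gt hdpos)]
      have hzball : x₀ + b*(x' - x₀) ∈ Metric.ball x₀ δ := by
        rw [Metric.mem_ball, Real.dist_eq]
        have h3 : x₀ + b*(x'-x₀) - x₀ = b*(x'-x₀) := by ring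
        rw [h3, habs]; linarith
      have h1 := hst y₀ hx₀ _ hzball
      have h2 := chord hφ hx' (x₀ := x₀) b hb0 hb1
      have h3 : x₀ + b*(x'-x₀) - x₀ = b*(x'-x₀) := by ring
      rw [h3, habs] at h1
      have h4 : c * (δ/2)^2 ≤ |y-y₀| * (δ/2) := by
        calc c*(δ/2)^2 ≤ φ (x₀+b*(x'-x₀)) - φ x₀ - y₀*(b*(x'-x₀)) := h1
          _ ≤ (y-y₀)*(b*(x'-x₀)) := by linarith
          _ ≤ |(y-y₀)*(b*(x'-x₀))| := le_abs_self _
          _ = |y-y₀| * (δ/2) := by rw [abs_mul, habs]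
      nlinarith
  have hypos : 0 < |y - y₀| := abs_pos.mpr (sub_ne_zero.mpr hyne')
  rw [div_le_div_iff₀ hypos hc]
  have := (le_div_iff₀ hc).mp key
  linarith
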